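/- With the pseudo-inverse setup below, the linearized operator DT[ω₀;0], which acts componentwise by (ν_l^i, a_l^i) ↦ ( (D_l^i/2)((λ_l^i)² − (v_l^i)²) ν_l^i + D_l^i λ_l^i v_l^i a_l^i , D_l^i (λ_l^i)² a_l^i ), is a linear isomorphism from Ω_{1/2} onto Ω_1: for every w ∈ Ω_1 the equation DT[ω₀;0]ω = w has a unique solution ω ∈ Ω_{1/2}, and there exists a constant C>0 with |||ω|||_{1/2} ≤ C |||w|||_1. -/

import Mathlib

open MeasureTheory
open scoped ENNReal NNReal

namespace PredPrey6

/-- Data of the two-species pseudo-inverse setup: the escape parameter `α`, the interaction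
kernels `S_ρ, S_η, K` with odd antiderivatives `G_ρ, G_η, H`, the bump masses `z_l^i` and the
centres `cm_l^i`. -/
structure Setup (Nρ Nη : ℕ) where
  α : ℝ
  Sρ : ℝ → ℝ
  Sη : ℝ → ℝ
  K : ℝ → ℝ
  Gρ : ℝ → ℝ
  Gη : ℝ → ℝ
  H : ℝ → ℝ
  zρ : Fin Nρ → ℝ
  zη : Fin Nη → ℝ
  cmρ : Fin Nρ → ℝ
  cmη : Fin Nη → ℝ

/-- Unified index `(l,i)` for the bumps of the two species. -/
abbrev Idx (Nρ Nη : ℕ) := Sum (Fin Nρ) (Fin Nη)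

/-- Elements `ω = (v, λ)`: families of profiles `v_l^i` and of reals `λ_l^i`. -/
abbrev El (Nρ Nη : ℕ) := (Idx Nρ Nη → ℝ → ℝ) × (Idx Nρ Nη → ℝ)

namespace Setup

variable {Nρ Nη : ℕ} (P : Setup Nρ Nη)

/-- Mass of the bump `k`. -/
def z : Idx Nρ Nη → ℝ := Sum.elim P.zρ P.zη

/-- Centre of the bump `k`. -/
def cm : Idx Nρ Nη → ℝ := Sum.elim P.cmρ P.cmη

/-- Interaction kernel between bumps `k` and `j` (self or cross). -/
def ker : Idx Nρ Nη → Idx Nρ Nη → ℝ → ℝ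
  | .inl _, .inl _ => P.Sρ
  | .inr _, .inr _ => P.Sη
  | _, _ => P.K

/-- Coupling coefficient: `1` within a species and for the predators, `−α` for the prey. -/
def co : Idx Nρ Nη → Idx Nρ Nη → ℝ
  | .inr _, .inl _ => -P.α
  | _, _ => 1

/-- Left endpoint `ẑ_l^i` of the interval `J_l^i` in the partition of `[0,z_l]`. -/
def zhat : Idx Nρ Nη → ℝ
  | .inl i => ∑ j ∈ Finset.univ.filter fun j => j < i, P.zρ j
  | .inr i => ∑ j ∈ Finset.univ.filter fun j => j < i, P.zη j

/-- Right endpoint `z̃_l^i` of `J_l^i`. -/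
def ztil (k : Idx Nρ Nη) : ℝ := P.zhat k + P.z k

/-- Midpoint `z̄_l^i` of `J_l^i`. -/
noncomputable def zbar (k : Idx Nρ Nη) : ℝ := P.zhat k + P.z k / 2

/-- Stationarity quantities `B_l^i`. -/
noncomputable def B (k : Idx Nρ Nη) : ℝ :=
  ∑ j, P.co k j * deriv (P.ker k j) (P.cm k - P.cm j) * P.z j

/-- Stability quantities `D_l^i`. -/
noncomputable def D (k : Idx Nρ Nη) : ℝ :=
  -∑ j, P.co k j * deriv (deriv (P.ker k j)) (P.cm k - P.cm j) * P.z j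

/-- The norm `|||ω|||_γ` (with values in `ℝ≥0∞`). -/
noncomputable def normG (γ : ℝ) (ω : El Nρ Nη) : ℝ≥0∞ :=
  (∑ k, ((⨆ zv ∈ Set.Ico (P.zbar k) (P.ztil k), (‖ω.1 k zv‖₊ : ℝ≥0∞)) +
      (‖ω.2 k‖₊ : ℝ≥0∞))) +
    ∑ k, ⨆ zv ∈ Set.Ico (P.zbar k) (P.ztil k),
      ENNReal.ofReal (|ω.2 k - ω.1 k zv| / (P.ztil k - zv) ^ γ)

/-- `ω₀` is the Barenblatt-type solution of the limiting system `T[ω;0]=0`: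
`λ_l^i = (3(z̃−z̄)/D)^{1/3}` and `v_l^i` the increasing solution of the cubic equation
with `v_l^i(z̄)=0`. -/
def IsOmega0 (ω₀ : El Nρ Nη) : Prop :=
  (∀ k, ω₀.2 k = (3 * (P.ztil k - P.zbar k) / P.D k) ^ ((1 : ℝ) / 3)) ∧
  (∀ k, ω₀.1 k (P.zbar k) = 0) ∧
  (∀ k, StrictMonoOn (ω₀.1 k) (Set.Ico (P.zbar k) (P.ztil k))) ∧
  (∀ k, ∀ zv ∈ Set.Ico (P.zbar k) (P.ztil k),
    (P.zbar k - zv) + P.D k / 6 * (3 * ω₀.2 k ^ 2 * ω₀.1 k zv - ω₀.1 k zv ^ 3) = 0)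

/-- The linearized operator `DT[ω₀;0]`, acting componentwise by
`(ν,a) ↦ ((D/2)(λ²−v²)ν + Dλva , Dλ²a)`. -/
noncomputable def DT0 (ω₀ u : El Nρ Nη) : El Nρ Nη :=
  (fun k zv => P.D k / 2 * (ω₀.2 k ^ 2 - ω₀.1 k zv ^ 2) * u.1 k zv +
      P.D k * ω₀.2 k * ω₀.1 k zv * u.2 k,
   fun k => P.D k * ω₀.2 k ^ 2 * u.2 k)

end Setup

end PredPrey6

open PredPrey6 PredPrey6.Setup

set_option maxHeartbeats 1000000


private lemma pp6_cube_mono {lam t t' : ℝ} (hlam : 0 < lam) (h0 : 0 < t) (h : t < t') :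
    t^2*(3*lam+t) < t'^2*(3*lam+t') := by
  nlinarith [mul_pos (mul_pos hlam (sub_pos.2 h)) (by linarith : (0:ℝ) < t'+t),
    mul_pos (sub_pos.2 h) (by nlinarith : (0:ℝ) < t'^2+t'*t+t^2)]

private lemma pp6_key (D lam zb zt zv u : ℝ)
    (hcube : D * lam^3 = 3*(zt - zb))
    (hc : (zb - zv) + D/6*(3*lam^2*u - u^3) = 0) :
    zt - zv = D/6*(lam-u)^2*(2*lam+u) := by
  linear_combination (-1/3 : ℝ) * hcube + hc

private lemma pp6_est (D lam u s L R b fv aa : ℝ)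
    (hD : 0 < D) (hlam : 0 < lam) (hu0 : 0 ≤ u) (hul : u < lam)
    (hs : 0 < s) (hsL : s ≤ L)
    (hseq : s = D/6*(lam-u)^2*(2*lam+u))
    (haa : aa = b/(D*lam^2))
    (hf : |b - fv| ≤ R*s) (hR : 0 ≤ R) :
    |(fv - D*lam*u*aa)/(D/2*(lam^2-u^2))| ≤ 2*|aa| + R*Real.sqrt (2*L/(D*lam)) ∧
    |aa - (fv - D*lam*u*aa)/(D/2*(lam^2-u^2))| ≤
      Real.sqrt s * (Real.sqrt (3/(D*lam))/lam * |aa| + Real.sqrt (2/(D*lam)) * R) := by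
  have hlu : 0 < lam + u := by linarith
  have hml : 0 < lam - u := by linarith
  have hDl : 0 < D*lam := by positivity
  have hne : lam^2 - u^2 ≠ 0 := by nlinarith [mul_pos hml hlu]
  have hden : 0 < D/2*(lam^2-u^2) := by nlinarith [mul_pos hml hlu, hD]
  have hX : 0 < 2*s/(D*lam) := by positivity
  have hXle : 2*s/(D*lam) ≤ (lam-u)^2 := by
    rw [div_le_iff₀ hDl]; nlinarith
  have hsX : Real.sqrt (2*s/(D*lam)) ≤ lam - u := by
    calc Real.sqrt (2*s/(D*lam)) ≤ Real.sqrt ((lam-u)^2) := Real.sqrt_le_sqrt hXle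
      _ = lam - u := Real.sqrt_sq hml.le
  have hsX0 : 0 < Real.sqrt (2*s/(D*lam)) := Real.sqrt_pos.2 hX
  have hs3 : (lam - u)^2 ≤ 3*s/(D*lam) := by
    rw [le_div_iff₀ hDl]; nlinarith
  have hsX3 : lam - u ≤ Real.sqrt (3*s/(D*lam)) := by
    calc lam - u = Real.sqrt ((lam-u)^2) := (Real.sqrt_sq hml.le).symm
      _ ≤ _ := Real.sqrt_le_sqrt hs3
  have hsplit2 : Real.sqrt (2*s/(D*lam)) = Real.sqrt s * Real.sqrt (2/(D*lam)) := by
    rw [← Real.sqrt_mul hs.le]; ring_nf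
  have hsplit3 : Real.sqrt (3*s/(D*lam)) = Real.sqrt s * Real.sqrt (3/(D*lam)) := by
    rw [← Real.sqrt_mul hs.le]; ring_nf
  have hnueq : (fv - D*lam*u*aa)/(D/2*(lam^2-u^2))
      = 2*lam*aa/(lam+u) - 2*(b - fv)/(D*(lam-u)*(lam+u)) := by
    subst haa
    field_simp [hD.ne', hlam.ne', hlu.ne', hml.ne', hne]
    ring
  have ht1 : |2*lam*aa/(lam+u)| ≤ 2*|aa| := by
    rw [abs_div, abs_of_pos hlu, div_le_iff₀ hlu]
    have h2 : |2*lam*aa| = 2*lam*|aa| := by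
      rw [abs_mul, abs_mul, abs_two, abs_of_pos hlam]
    rw [h2]; nlinarith [abs_nonneg aa]
  have ht2 : |2*(b - fv)/(D*(lam-u)*(lam+u))| ≤ R*Real.sqrt (2*s/(D*lam)) := by
    have hd2 : 0 < D*(lam-u)*(lam+u) := by positivity
    rw [abs_div, abs_of_pos hd2, div_le_iff₀ hd2]
    have h1 : |2*(b-fv)| ≤ 2*(R*s) := by rw [abs_mul, abs_two]; nlinarith
    have e1 : Real.sqrt (2*s/(D*lam)) * Real.sqrt (2*s/(D*lam)) = 2*s/(D*lam) :=
      Real.mul_self_sqrt hX.le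
    have e3 : 2*s/(D*lam) * (D*lam) = 2*s := by field_simp
    have h2 : 2*(R*s) ≤ R*Real.sqrt (2*s/(D*lam))*(D*(lam-u)*(lam+u)) := by
      set q := Real.sqrt (2*s/(D*lam)) with hq
      calc 2*(R*s) = R*(2*s/(D*lam) * (D*lam)) := by rw [e3]; ring
        _ = R*(q*q)*(D*lam) := by rw [e1]; ring
        _ ≤ R*(q*(lam-u))*(D*lam) := by gcongr
        _ ≤ R*q*(D*(lam-u)*(lam+u)) := by
            nlinarith [mul_nonneg (mul_nonneg (mul_nonneg hR hsX0.le) hml.le) hD.le, hu0]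
    linarith
  constructor
  · rw [hnueq]
    calc |2*lam*aa/(lam+u) - 2*(b - fv)/(D*(lam-u)*(lam+u))|
        ≤ |2*lam*aa/(lam+u)| + |2*(b - fv)/(D*(lam-u)*(lam+u))| := abs_sub _ _
      _ ≤ 2*|aa| + R*Real.sqrt (2*s/(D*lam)) := add_le_add ht1 ht2
      _ ≤ 2*|aa| + R*Real.sqrt (2*L/(D*lam)) := by
          gcongr
  · have heq2 : aa - (fv - D*lam*u*aa)/(D/2*(lam^2-u^2))
        = (u - lam)*aa/(lam+u) + 2*(b - fv)/(D*(lam-u)*(lam+u)) := by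
      rw [hnueq]
      field_simp [hD.ne', hlam.ne', hlu.ne', hml.ne', hne]
      ring
    have ht3 : |(u - lam)*aa/(lam+u)| ≤ Real.sqrt s * (Real.sqrt (3/(D*lam))/lam * |aa|) := by
      have h4 : |(u - lam)*aa/(lam+u)| = (lam-u)/(lam+u)*|aa| := by
        rw [abs_div, abs_of_pos hlu, abs_mul, abs_sub_comm, abs_of_pos hml]; ring
      rw [h4]
      have h7 : (lam-u)/(lam+u) ≤ (lam-u)/lam := by gcongr <;> linarith
      have h8 : (lam-u)/lam ≤ Real.sqrt s * Real.sqrt (3/(D*lam))/lam := by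
        gcongr
        rw [← hsplit3]; exact hsX3
      calc (lam-u)/(lam+u)*|aa| ≤ (Real.sqrt s * Real.sqrt (3/(D*lam))/lam)*|aa| :=
            mul_le_mul_of_nonneg_right (h7.trans h8) (abs_nonneg aa)
        _ = Real.sqrt s * (Real.sqrt (3/(D*lam))/lam * |aa|) := by ring
    rw [heq2]
    calc |(u - lam)*aa/(lam+u) + 2*(b - fv)/(D*(lam-u)*(lam+u))|
        ≤ |(u - lam)*aa/(lam+u)| + |2*(b - fv)/(D*(lam-u)*(lam+u))| := abs_add_le _ _
      _ ≤ Real.sqrt s * (Real.sqrt (3/(D*lam))/lam * |aa|) + R*Real.sqrt (2*s/(D*lam)) :=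
          add_le_add ht3 ht2
      _ = Real.sqrt s * (Real.sqrt (3/(D*lam))/lam * |aa| + Real.sqrt (2/(D*lam)) * R) := by
          rw [hsplit2]; ring

/-- The linearization `DT[ω₀;0]` is a linear isomorphism from `Ω_{1/2}` onto `Ω_1`:
for every `w ∈ Ω_1` the equation `DT[ω₀;0]ω = w` has a unique solution `ω ∈ Ω_{1/2}`, with
a uniform bound `|||ω|||_{1/2} ≤ C |||w|||_1`. -/
theorem stmt_6 (Nρ Nη : ℕ) (P : Setup Nρ Nη) (hα : 0 < P.α)
    (hSρ : ContDiff ℝ 3 P.Sρ) (hSη : ContDiff ℝ 3 P.Sη) (hK : ContDiff ℝ 3 P.K)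
    (hSρe : ∀ x, P.Sρ (-x) = P.Sρ x) (hSηe : ∀ x, P.Sη (-x) = P.Sη x)
    (hKe : ∀ x, P.K (-x) = P.K x)
    (hSρm : AntitoneOn P.Sρ (Set.Ici 0)) (hSηm : AntitoneOn P.Sη (Set.Ici 0))
    (hKm : AntitoneOn P.K (Set.Ici 0))
    (hSρnn : ∀ x, 0 ≤ P.Sρ x) (hSηnn : ∀ x, 0 ≤ P.Sη x) (hKnn : ∀ x, 0 ≤ P.K x)
    (hSρint : MeasureTheory.Integrable P.Sρ) (hSηint : MeasureTheory.Integrable P.Sη)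
    (hKint : MeasureTheory.Integrable P.K)
    (hGρ : ∀ x, HasDerivAt P.Gρ (P.Sρ x) x) (hGη : ∀ x, HasDerivAt P.Gη (P.Sη x) x)
    (hH : ∀ x, HasDerivAt P.H (P.K x) x)
    (hGρo : ∀ x, P.Gρ (-x) = -P.Gρ x) (hGηo : ∀ x, P.Gη (-x) = -P.Gη x)
    (hHo : ∀ x, P.H (-x) = -P.H x)
    (hGρ0 : P.Gρ 0 = 0) (hGη0 : P.Gη 0 = 0) (hH0 : P.H 0 = 0)
    (hz : ∀ k, 0 < P.z k) (hB : ∀ k, P.B k = 0) (hD : ∀ k, 0 < P.D k)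
    (ω₀ : El Nρ Nη) (hω₀ : P.IsOmega0 ω₀) :
    ∃ C : ℝ≥0∞, 0 < C ∧ C ≠ ⊤ ∧
      ∀ w : El Nρ Nη, P.normG 1 w ≠ ⊤ → (∀ k, w.1 k (P.zbar k) = 0) →
        ∃ ω : El Nρ Nη,
          (∀ k, ω.1 k (P.zbar k) = 0) ∧
          P.normG (1 / 2) ω ≠ ⊤ ∧
          (∀ k, ∀ zv ∈ Set.Ico (P.zbar k) (P.ztil k), (P.DT0 ω₀ ω).1 k zv = w.1 k zv) ∧
          (∀ k, (P.DT0 ω₀ ω).2 k = w.2 k) ∧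
          P.normG (1 / 2) ω ≤ C * P.normG 1 w ∧
          (∀ ω' : El Nρ Nη,
            (∀ k, ω'.1 k (P.zbar k) = 0) →
            P.normG (1 / 2) ω' ≠ ⊤ →
            (∀ k, ∀ zv ∈ Set.Ico (P.zbar k) (P.ztil k), (P.DT0 ω₀ ω').1 k zv = w.1 k zv) →
            (∀ k, (P.DT0 ω₀ ω').2 k = w.2 k) →
            (∀ k, ∀ zv ∈ Set.Ico (P.zbar k) (P.ztil k), ω'.1 k zv = ω.1 k zv) ∧
              ω'.2 = ω.2) := by
  classical
  obtain ⟨hlam0, hv00, hmono, hcubic⟩ := hω₀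
  have hLpos : ∀ k, 0 < P.ztil k - P.zbar k := by
    intro k
    have h := hz k
    simp only [Setup.ztil, Setup.zbar]
    linarith
  have hmemb : ∀ k, P.zbar k ∈ Set.Ico (P.zbar k) (P.ztil k) :=
    fun k => ⟨le_rfl, by linarith [hLpos k]⟩
  have hlampos : ∀ k, 0 < ω₀.2 k := by
    intro k
    rw [hlam0 k]
    exact Real.rpow_pos_of_pos (div_pos (by linarith [hLpos k]) (hD k)) _
  have hlamcube : ∀ k, P.D k * (ω₀.2 k)^3 = 3 * (P.ztil k - P.zbar k) := by
    intro k
    have h1 : (0:ℝ) < 3 * (P.ztil k - P.zbar k) / P.D k :=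
      div_pos (by linarith [hLpos k]) (hD k)
    rw [hlam0 k, ← Real.rpow_natCast ((3 * (P.ztil k - P.zbar k) / P.D k) ^ ((1:ℝ)/3)) 3,
        ← Real.rpow_mul h1.le]
    norm_num
    field_simp
    exact mul_div_cancel_left₀ _ (hD k).ne'
  have hkey : ∀ k, ∀ zv ∈ Set.Ico (P.zbar k) (P.ztil k),
      P.ztil k - zv = P.D k/6*(ω₀.2 k - ω₀.1 k zv)^2*(2*ω₀.2 k + ω₀.1 k zv) :=
    fun k zv hzv => pp6_key _ _ _ _ _ _ (hlamcube k) (hcubic k zv hzv)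
  have hvnn : ∀ k, ∀ zv ∈ Set.Ico (P.zbar k) (P.ztil k), 0 ≤ ω₀.1 k zv := by
    intro k zv hzv
    rcases eq_or_lt_of_le hzv.1 with h | h
    · rw [← h, hv00 k]
    · have h2 := hmono k (hmemb k) hzv h
      rw [hv00 k] at h2
      exact h2.le
  have hvlt : ∀ k, ∀ zv ∈ Set.Ico (P.zbar k) (P.ztil k), ω₀.1 k zv < ω₀.2 k := by
    intro k zv hzv
    by_contra hle
    push_neg at hle
    have hk1 := hkey k zv hzv
    have hu0 := hvnn k zv hzv
    have hsp : 0 < P.ztil k - zv := by linarith [hzv.2]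
    rcases eq_or_lt_of_le hle with he | hlt
    · rw [he, sub_self] at hk1
      simp at hk1
      linarith
    · have hzvlt : zv < (zv + P.ztil k)/2 := by linarith [hzv.2]
      have hzv' : (zv + P.ztil k)/2 ∈ Set.Ico (P.zbar k) (P.ztil k) :=
        ⟨by linarith [hzv.1, hzv.2], by linarith [hzv.2]⟩
      have hk2 := hkey k ((zv + P.ztil k)/2) hzv'
      have hu' := hmono k hzv hzv' hzvlt
      have hmono2 := pp6_cube_mono (hlampos k)
        (show 0 < ω₀.1 k zv - ω₀.2 k by linarith)
        (show ω₀.1 k zv - ω₀.2 k < ω₀.1 k ((zv + P.ztil k)/2) - ω₀.2 k by linarith)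
      nlinarith [mul_lt_mul_of_pos_left hmono2 (by linarith [hD k] : (0:ℝ) < P.D k/6)]
  have hdenpos : ∀ k, ∀ zv ∈ Set.Ico (P.zbar k) (P.ztil k),
      0 < P.D k/2*((ω₀.2 k)^2 - (ω₀.1 k zv)^2) := by
    intro k zv hzv
    have h1 := hvnn k zv hzv
    have h2 := hvlt k zv hzv
    have h3 := hD k
    have h4 := hlampos k
    nlinarith [mul_pos (sub_pos.2 h2) (show 0 < ω₀.2 k + ω₀.1 k zv by linarith)]
  -- global constant
  set Kc : Idx Nρ Nη → ℝ := fun k =>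
    3/(P.D k*(ω₀.2 k)^2)
    + Real.sqrt (2*(P.ztil k - P.zbar k)/(P.D k*ω₀.2 k))
    + Real.sqrt (3/(P.D k*ω₀.2 k))/(ω₀.2 k)*(1/(P.D k*(ω₀.2 k)^2))
    + Real.sqrt (2/(P.D k*ω₀.2 k)) with hKcdef
  have hKcnn : ∀ k, 0 ≤ Kc k := by
    intro k
    have h1 := hD k
    have h2 := hlampos k
    simp only [hKcdef]
    positivity
  set KR : ℝ := (∑ k, Kc k) + 1 with hKRdef
  have hKRsum : 0 ≤ ∑ k, Kc k := Finset.sum_nonneg fun k _ => hKcnn k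
  have hKR1 : (1:ℝ) ≤ KR := by rw [hKRdef]; linarith
  have hKck : ∀ k, Kc k ≤ KR := by
    intro k
    have h := Finset.single_le_sum (fun j (_ : j ∈ Finset.univ) => hKcnn j) (Finset.mem_univ k)
    rw [hKRdef]
    linarith
  refine ⟨ENNReal.ofReal KR, ENNReal.ofReal_pos.2 (by linarith), ENNReal.ofReal_ne_top, ?_⟩
  intro w hw hwz
  set aa : Idx Nρ Nη → ℝ := fun k => w.2 k/(P.D k*(ω₀.2 k)^2) with haadef
  set nu : Idx Nρ Nη → ℝ → ℝ := fun k zv =>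
    (w.1 k zv - P.D k*ω₀.2 k*ω₀.1 k zv*aa k)/
      (P.D k/2*((ω₀.2 k)^2 - (ω₀.1 k zv)^2)) with hnudef
  set SH : Idx Nρ Nη → ℝ≥0∞ := fun k => ⨆ zv ∈ Set.Ico (P.zbar k) (P.ztil k),
      ENNReal.ofReal (|w.2 k - w.1 k zv| / (P.ztil k - zv) ^ (1:ℝ)) with hSHdef
  have hnormw : P.normG 1 w = (∑ k, ((⨆ zv ∈ Set.Ico (P.zbar k) (P.ztil k),
      (‖w.1 k zv‖₊ : ℝ≥0∞)) + (‖w.2 k‖₊ : ℝ≥0∞))) + ∑ k, SH k := by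
    simp only [Setup.normG, hSHdef]
  have hSHfin : ∀ k, SH k ≠ ⊤ := by
    intro k
    rw [hnormw] at hw
    have h1 : ∑ j, SH j ≠ ⊤ := (ENNReal.add_ne_top.1 hw).2
    exact (ENNReal.sum_lt_top.1 h1.lt_top k (Finset.mem_univ k)).ne
  set R : Idx Nρ Nη → ℝ := fun k => (SH k).toReal with hRdef
  have hRnn : ∀ k, 0 ≤ R k := fun k => ENNReal.toReal_nonneg
  have hRbd : ∀ k, ∀ zv ∈ Set.Ico (P.zbar k) (P.ztil k),
      |w.2 k - w.1 k zv| ≤ R k * (P.ztil k - zv) := by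
    intro k zv hzv
    have hsp : 0 < P.ztil k - zv := by linarith [hzv.2]
    have h1 : ENNReal.ofReal (|w.2 k - w.1 k zv| / (P.ztil k - zv) ^ (1:ℝ)) ≤ SH k := by
      simp only [hSHdef]
      exact le_iSup₂ (f := fun zv (_ : zv ∈ Set.Ico (P.zbar k) (P.ztil k)) =>
        ENNReal.ofReal (|w.2 k - w.1 k zv| / (P.ztil k - zv) ^ (1:ℝ))) zv hzv
    rw [Real.rpow_one] at h1
    have h2 : |w.2 k - w.1 k zv| / (P.ztil k - zv) ≤ R k := by
      have h3 := ENNReal.toReal_mono (hSHfin k) h1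
      rwa [ENNReal.toReal_ofReal (by positivity)] at h3
    calc |w.2 k - w.1 k zv| = |w.2 k - w.1 k zv| / (P.ztil k - zv) * (P.ztil k - zv) := by
          field_simp
      _ ≤ R k * (P.ztil k - zv) := mul_le_mul_of_nonneg_right h2 hsp.le
  have hest : ∀ k, ∀ zv ∈ Set.Ico (P.zbar k) (P.ztil k),
      |nu k zv| ≤ 2*|aa k| + R k*Real.sqrt (2*(P.ztil k - P.zbar k)/(P.D k*ω₀.2 k)) ∧
      |aa k - nu k zv| ≤ Real.sqrt (P.ztil k - zv) *
        (Real.sqrt (3/(P.D k*ω₀.2 k))/(ω₀.2 k)*|aa k| + Real.sqrt (2/(P.D k*ω₀.2 k))*R k) := by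
    intro k zv hzv
    exact pp6_est (P.D k) (ω₀.2 k) (ω₀.1 k zv) (P.ztil k - zv) (P.ztil k - P.zbar k)
      (R k) (w.2 k) (w.1 k zv) (aa k) (hD k) (hlampos k) (hvnn k zv hzv) (hvlt k zv hzv)
      (by linarith [hzv.2]) (by linarith [hzv.1]) (hkey k zv hzv) rfl (hRbd k zv hzv) (hRnn k)
  have hnu0 : ∀ k, nu k (P.zbar k) = 0 := by
    intro k
    simp [hnudef, hwz k, hv00 k]
  have heqn1 : ∀ k, ∀ zv ∈ Set.Ico (P.zbar k) (P.ztil k),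
      (P.DT0 ω₀ (nu, aa)).1 k zv = w.1 k zv := by
    intro k zv hzv
    have hden := hdenpos k zv hzv
    have hne2 : (ω₀.2 k)^2 - (ω₀.1 k zv)^2 ≠ 0 := by
      intro hc
      rw [hc, mul_zero] at hden
      exact lt_irrefl _ hden
    simp only [Setup.DT0, hnudef]
    rw [mul_comm (P.D k/2*((ω₀.2 k)^2 - (ω₀.1 k zv)^2)), div_mul_cancel₀ _ hden.ne']
    ring
  have heqn2 : ∀ k, (P.DT0 ω₀ (nu, aa)).2 k = w.2 k := by
    intro k
    simp only [Setup.DT0, haadef]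
    rw [mul_comm]
    exact div_mul_cancel₀ _ (mul_pos (hD k) (pow_pos (hlampos k) 2)).ne'
  have hperk : ∀ k,
      (((⨆ zv ∈ Set.Ico (P.zbar k) (P.ztil k), (‖nu k zv‖₊ : ℝ≥0∞)) + (‖aa k‖₊ : ℝ≥0∞)) +
        ⨆ zv ∈ Set.Ico (P.zbar k) (P.ztil k),
          ENNReal.ofReal (|aa k - nu k zv| / (P.ztil k - zv) ^ ((1:ℝ)/2)))
      ≤ ENNReal.ofReal (KR * (|w.2 k| + R k)) := by
    intro k
    have hDk := hD k
    have hlamk := hlampos k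
    have haak : |aa k| = |w.2 k|/(P.D k*(ω₀.2 k)^2) := by
      simp only [haadef]
      rw [abs_div, abs_of_pos (mul_pos (hD k) (pow_pos (hlampos k) 2))]
    have hc1nn : (0:ℝ) ≤ 2*|aa k| + R k*Real.sqrt (2*(P.ztil k - P.zbar k)/(P.D k*ω₀.2 k)) := by
      have := hRnn k
      positivity
    have hc2nn : (0:ℝ) ≤ Real.sqrt (3/(P.D k*ω₀.2 k))/(ω₀.2 k)*|aa k|
        + Real.sqrt (2/(P.D k*ω₀.2 k))*R k := by
      have := hRnn k
      positivity
    have hS1 : (⨆ zv ∈ Set.Ico (P.zbar k) (P.ztil k), (‖nu k zv‖₊ : ℝ≥0∞))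
        ≤ ENNReal.ofReal (2*|aa k| + R k*Real.sqrt (2*(P.ztil k - P.zbar k)/(P.D k*ω₀.2 k))) := by
      refine iSup₂_le fun zv hzv => ?_
      rw [← enorm_eq_nnnorm, ← ofReal_norm, Real.norm_eq_abs]
      exact ENNReal.ofReal_le_ofReal (hest k zv hzv).1
    have hS2 : (‖aa k‖₊ : ℝ≥0∞) = ENNReal.ofReal |aa k| := by
      rw [← enorm_eq_nnnorm, ← ofReal_norm, Real.norm_eq_abs]
    have hS3 : (⨆ zv ∈ Set.Ico (P.zbar k) (P.ztil k),
        ENNReal.ofReal (|aa k - nu k zv| / (P.ztil k - zv) ^ ((1:ℝ)/2)))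
        ≤ ENNReal.ofReal (Real.sqrt (3/(P.D k*ω₀.2 k))/(ω₀.2 k)*|aa k|
            + Real.sqrt (2/(P.D k*ω₀.2 k))*R k) := by
      refine iSup₂_le fun zv hzv => ?_
      refine ENNReal.ofReal_le_ofReal ?_
      have hsp : 0 < P.ztil k - zv := by linarith [hzv.2]
      have hrp : (P.ztil k - zv) ^ ((1:ℝ)/2) = Real.sqrt (P.ztil k - zv) :=
        (Real.sqrt_eq_rpow _).symm
      rw [hrp, div_le_iff₀ (Real.sqrt_pos.2 hsp)]
      calc |aa k - nu k zv| ≤ Real.sqrt (P.ztil k - zv) *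
            (Real.sqrt (3/(P.D k*ω₀.2 k))/(ω₀.2 k)*|aa k|
              + Real.sqrt (2/(P.D k*ω₀.2 k))*R k) := (hest k zv hzv).2
        _ = (Real.sqrt (3/(P.D k*ω₀.2 k))/(ω₀.2 k)*|aa k|
              + Real.sqrt (2/(P.D k*ω₀.2 k))*R k) * Real.sqrt (P.ztil k - zv) := mul_comm _ _
    have hreal : (2*|aa k| + R k*Real.sqrt (2*(P.ztil k - P.zbar k)/(P.D k*ω₀.2 k))) + |aa k|
        + (Real.sqrt (3/(P.D k*ω₀.2 k))/(ω₀.2 k)*|aa k| + Real.sqrt (2/(P.D k*ω₀.2 k))*R k)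
        ≤ KR * (|w.2 k| + R k) := by
      have hKk : Kc k ≤ KR := hKck k
      simp only [hKcdef] at hKk
      have hb1 : 3/(P.D k*(ω₀.2 k)^2)
          + Real.sqrt (3/(P.D k*ω₀.2 k))/(ω₀.2 k)*(1/(P.D k*(ω₀.2 k)^2)) ≤ KR := by
        have s1 : (0:ℝ) ≤ Real.sqrt (2*(P.ztil k - P.zbar k)/(P.D k*ω₀.2 k)) :=
          Real.sqrt_nonneg _
        have s2 : (0:ℝ) ≤ Real.sqrt (2/(P.D k*ω₀.2 k)) := Real.sqrt_nonneg _
        linarith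
      have hb2 : Real.sqrt (2*(P.ztil k - P.zbar k)/(P.D k*ω₀.2 k))
          + Real.sqrt (2/(P.D k*ω₀.2 k)) ≤ KR := by
        have s1 : (0:ℝ) ≤ 3/(P.D k*(ω₀.2 k)^2) := by positivity
        have s2 : (0:ℝ) ≤ Real.sqrt (3/(P.D k*ω₀.2 k))/(ω₀.2 k)*(1/(P.D k*(ω₀.2 k)^2)) := by
          positivity
        linarith
      have hlhs : (2*|aa k| + R k*Real.sqrt (2*(P.ztil k - P.zbar k)/(P.D k*ω₀.2 k))) + |aa k|
          + (Real.sqrt (3/(P.D k*ω₀.2 k))/(ω₀.2 k)*|aa k| + Real.sqrt (2/(P.D k*ω₀.2 k))*R k)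
          = (3/(P.D k*(ω₀.2 k)^2)
              + Real.sqrt (3/(P.D k*ω₀.2 k))/(ω₀.2 k)*(1/(P.D k*(ω₀.2 k)^2))) * |w.2 k|
            + (Real.sqrt (2*(P.ztil k - P.zbar k)/(P.D k*ω₀.2 k))
              + Real.sqrt (2/(P.D k*ω₀.2 k))) * R k := by
        rw [haak]
        field_simp
        ring
      rw [hlhs]
      have := hRnn k
      calc (3/(P.D k*(ω₀.2 k)^2)
              + Real.sqrt (3/(P.D k*ω₀.2 k))/(ω₀.2 k)*(1/(P.D k*(ω₀.2 k)^2))) * |w.2 k|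
            + (Real.sqrt (2*(P.ztil k - P.zbar k)/(P.D k*ω₀.2 k))
              + Real.sqrt (2/(P.D k*ω₀.2 k))) * R k
          ≤ KR * |w.2 k| + KR * R k := by
            refine add_le_add (mul_le_mul_of_nonneg_right hb1 (abs_nonneg _))
              (mul_le_mul_of_nonneg_right hb2 (hRnn k))
        _ = KR * (|w.2 k| + R k) := by ring
    calc (((⨆ zv ∈ Set.Ico (P.zbar k) (P.ztil k), (‖nu k zv‖₊ : ℝ≥0∞)) + (‖aa k‖₊ : ℝ≥0∞)) +
          ⨆ zv ∈ Set.Ico (P.zbar k) (P.ztil k),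
            ENNReal.ofReal (|aa k - nu k zv| / (P.ztil k - zv) ^ ((1:ℝ)/2)))
        ≤ (ENNReal.ofReal (2*|aa k|
              + R k*Real.sqrt (2*(P.ztil k - P.zbar k)/(P.D k*ω₀.2 k)))
            + ENNReal.ofReal |aa k|)
          + ENNReal.ofReal (Real.sqrt (3/(P.D k*ω₀.2 k))/(ω₀.2 k)*|aa k|
              + Real.sqrt (2/(P.D k*ω₀.2 k))*R k) :=
          add_le_add (add_le_add hS1 hS2.le) hS3
      _ = ENNReal.ofReal ((2*|aa k|
              + R k*Real.sqrt (2*(P.ztil k - P.zbar k)/(P.D k*ω₀.2 k))) + |aa k|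
            + (Real.sqrt (3/(P.D k*ω₀.2 k))/(ω₀.2 k)*|aa k|
              + Real.sqrt (2/(P.D k*ω₀.2 k))*R k)) := by
          rw [← ENNReal.ofReal_add hc1nn (abs_nonneg _),
            ← ENNReal.ofReal_add (by positivity) hc2nn]
      _ ≤ ENNReal.ofReal (KR * (|w.2 k| + R k)) := ENNReal.ofReal_le_ofReal hreal
  have hbound : P.normG (1/2) (nu, aa) ≤ ENNReal.ofReal KR * P.normG 1 w := by
    have e1 : P.normG (1/2) (nu, aa)
        = ∑ k, ((((⨆ zv ∈ Set.Ico (P.zbar k) (P.ztil k), (‖nu k zv‖₊ : ℝ≥0∞))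
            + (‖aa k‖₊ : ℝ≥0∞))) +
          ⨆ zv ∈ Set.Ico (P.zbar k) (P.ztil k),
            ENNReal.ofReal (|aa k - nu k zv| / (P.ztil k - zv) ^ ((1:ℝ)/2))) := by
      simp only [Setup.normG]
      rw [← Finset.sum_add_distrib]
    calc P.normG (1/2) (nu, aa) = _ := e1
      _ ≤ ∑ k, ENNReal.ofReal (KR * (|w.2 k| + R k)) := Finset.sum_le_sum fun k _ => hperk k
      _ = ENNReal.ofReal KR * ∑ k, (ENNReal.ofReal |w.2 k| + ENNReal.ofReal (R k)) := by
          rw [Finset.mul_sum]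
          refine Finset.sum_congr rfl fun k _ => ?_
          rw [← ENNReal.ofReal_add (abs_nonneg _) (hRnn k),
            ← ENNReal.ofReal_mul (by linarith : (0:ℝ) ≤ KR)]
      _ ≤ ENNReal.ofReal KR * P.normG 1 w := by
          refine mul_le_mul_right ?_ _
          rw [hnormw]
          calc ∑ k, (ENNReal.ofReal |w.2 k| + ENNReal.ofReal (R k))
              = ∑ k, ((‖w.2 k‖₊ : ℝ≥0∞) + SH k) := by
                refine Finset.sum_congr rfl fun k _ => ?_
                rw [← Real.norm_eq_abs, ofReal_norm, enorm_eq_nnnorm]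
                simp only [hRdef]
                rw [ENNReal.ofReal_toReal (hSHfin k)]
            _ = (∑ k, (‖w.2 k‖₊ : ℝ≥0∞)) + ∑ k, SH k := Finset.sum_add_distrib
            _ ≤ (∑ k, ((⨆ zv ∈ Set.Ico (P.zbar k) (P.ztil k), (‖w.1 k zv‖₊ : ℝ≥0∞))
                + (‖w.2 k‖₊ : ℝ≥0∞))) + ∑ k, SH k := by
                refine add_le_add (Finset.sum_le_sum fun k _ => ?_) le_rfl
                exact le_add_self
  have hfinite : P.normG (1/2) (nu, aa) ≠ ⊤ :=
    ne_top_of_le_ne_top (ENNReal.mul_ne_top ENNReal.ofReal_ne_top hw) hbound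
  refine ⟨(nu, aa), hnu0, hfinite, heqn1, heqn2, hbound, ?_⟩
  intro ω' hz0' hfin' heq1' heq2'
  have h2 : ω'.2 = aa := by
    funext k
    have h := heq2' k
    simp only [Setup.DT0] at h
    simp only [haadef]
    rw [eq_div_iff (mul_pos (hD k) (pow_pos (hlampos k) 2)).ne']
    linear_combination h
  constructor
  · intro k zv hzv
    have h := heq1' k zv hzv
    simp only [Setup.DT0] at h
    have hden := hdenpos k zv hzv
    rw [h2] at h
    simp only [hnudef]
    rw [eq_div_iff hden.ne']
    linear_combination h
  · exact h2
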